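/- arXiv:2009.01621 — 4 statements merged into one kernel-verified Lean document; each statement's English description precedes it below -/
import Mathlib

section
/- Let u, ξ, ζ ∈ ℝ⁴, g the Minkowski metric, g(u,u) = −1, ξ timelike, ζ spacelike, and let Π(x,y) = g(x,y) + g(u,x)g(u,y). For any β with 0 ≤ β ≤ 1, the quadratic equation in Λ, (g(u, ζ + Λξ))² − β·Π(ζ + Λξ, ζ + Λξ) = 0, has leading coefficient (g(u,ξ))²(1−β) + β·(−g(ξ,ξ)) > 0 and its discriminant W := β[((g(u,ξ))² − Π(ξ,ξ))(Π(ζ,ζ) − (g(u,ζ))²) + (g(u,ξ)g(u,ζ) + Π(ξ,ζ))² + (1−β)(Π(ξ,ξ)Π(ζ,ζ) − Π(ξ,ζ)²)] is nonnegative; hence both roots Λ± are real. -/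
/-- The Minkowski inner product on ℝ⁴ with signature (−,+,+,+). -/
def mink (x y : Fin 4 → ℝ) : ℝ :=
  -(x 0 * y 0) + x 1 * y 1 + x 2 * y 2 + x 3 * y 3

/-- The projection bilinear form Π onto the orthogonal complement of u. -/
def minkProj (u x y : Fin 4 → ℝ) : ℝ :=
  mink x y + mink u x * mink u y

lemma psd_aux (a b c d p q r w : ℝ) (hu : -(a*a)+b*b+c*c+d*d = -1) :
    0 ≤ -(p*p)+q*q+r*r+w*w + (-(a*p)+b*q+c*r+d*w)*(-(a*p)+b*q+c*r+d*w) := by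
  have hu0 : a ^ 2 = 1 + (b^2 + c^2 + d^2) := by nlinarith [hu]
  have hQ : (0:ℝ) ≤ b^2 + c^2 + d^2 := by positivity
  rcases eq_or_lt_of_le hQ with h0 | hpos
  · have hb0 : b = 0 := by nlinarith [sq_nonneg b, sq_nonneg c, sq_nonneg d]
    have hc0 : c = 0 := by nlinarith [sq_nonneg b, sq_nonneg c, sq_nonneg d]
    have hd0 : d = 0 := by nlinarith [sq_nonneg b, sq_nonneg c, sq_nonneg d]
    rw [hb0, hc0, hd0]
    nlinarith [sq_nonneg q, sq_nonneg r, sq_nonneg w, hu0, sq_nonneg (a * p)]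
  · have key : (b^2+c^2+d^2) * a ^ 2 *
        (-(p * p) + q * q + r * r + w * w + (-(a * p) + b * q + c * r + d * w) * (-(a * p) + b * q + c * r + d * w))
        = ((b^2+c^2+d^2) * (a * p - (b*q+c*r+d*w)) - (b*q+c*r+d*w))^2
          + (1 + (b^2+c^2+d^2)) * ((b*r - c*q)^2 + (b*w - d*q)^2 + (c*w - d*r)^2) := by
      linear_combination ((b^2+c^2+d^2) * (q^2 + r^2 + w^2 + (a*p - (b*q+c*r+d*w))^2)) * hu0
    have ha : (0:ℝ) < a ^ 2 := by rw [hu0]; positivity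
    have h1 : 0 < (b^2+c^2+d^2) * a ^ 2 := mul_pos hpos ha
    have h2 : 0 ≤ (b^2+c^2+d^2) * a ^ 2 *
        (-(p * p) + q * q + r * r + w * w + (-(a * p) + b * q + c * r + d * w) * (-(a * p) + b * q + c * r + d * w)) := by
      rw [key]
      exact add_nonneg (sq_nonneg _) (mul_nonneg (by positivity) (by positivity))
    exact (mul_nonneg_iff_of_pos_left h1).mp h2

lemma psd (u x : Fin 4 → ℝ) (hu : mink u u = -1) : 0 ≤ minkProj u x x := by
  simp only [mink, minkProj] at *
  exact psd_aux (u 0) (u 1) (u 2) (u 3) (x 0) (x 1) (x 2) (x 3) hu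

/-- For 0 ≤ β ≤ 1 the quadratic (u·(ζ+Λξ))² − β Π(ζ+Λξ,ζ+Λξ) in Λ has
positive leading coefficient, nonnegative discriminant W, and two real roots. -/
theorem characteristic_quadratic_real_roots (u ξ ζ : Fin 4 → ℝ) (β : ℝ)
    (hu : mink u u = -1) (hξ : mink ξ ξ < 0) (hζ : mink ζ ζ > 0)
    (hβ0 : 0 ≤ β) (hβ1 : β ≤ 1) :
    0 < (mink u ξ) ^ 2 * (1 - β) + β * (-(mink ξ ξ)) ∧
    0 ≤ β * (((mink u ξ) ^ 2 - minkProj u ξ ξ) * (minkProj u ζ ζ - (mink u ζ) ^ 2)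
        + (mink u ξ * mink u ζ + minkProj u ξ ζ) ^ 2
        + (1 - β) * (minkProj u ξ ξ * minkProj u ζ ζ - (minkProj u ξ ζ) ^ 2)) ∧
    ∃ Λ₁ Λ₂ : ℝ, Λ₁ ≤ Λ₂ ∧
      (mink u (ζ + Λ₁ • ξ)) ^ 2 - β * minkProj u (ζ + Λ₁ • ξ) (ζ + Λ₁ • ξ) = 0 ∧
      (mink u (ζ + Λ₂ • ξ)) ^ 2 - β * minkProj u (ζ + Λ₂ • ξ) (ζ + Λ₂ • ξ) = 0 := by
  -- abbreviations (as local notation only)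
  have e1 : (mink u ξ) ^ 2 - minkProj u ξ ξ = -(mink ξ ξ) := by
    simp only [minkProj]; ring
  have e2 : minkProj u ζ ζ - (mink u ζ) ^ 2 = mink ζ ζ := by
    simp only [minkProj]; ring
  -- Cauchy–Schwarz for Π
  have hcs : (minkProj u ξ ζ) ^ 2 ≤ minkProj u ξ ξ * minkProj u ζ ζ := by
    have hq : ∀ t : ℝ, 0 ≤ minkProj u ξ ξ * (t * t) + (2 * minkProj u ξ ζ) * t
        + minkProj u ζ ζ := by
      intro t
      have h := psd u (ζ + t • ξ) hu
      have hexp : minkProj u (ζ + t • ξ) (ζ + t • ξ)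
          = minkProj u ξ ξ * (t * t) + (2 * minkProj u ξ ζ) * t + minkProj u ζ ζ := by
        simp only [mink, minkProj, Pi.add_apply, Pi.smul_apply, smul_eq_mul]
        ring
      linarith [hexp ▸ h]
    have hd := discrim_le_zero hq
    simp only [discrim] at hd
    nlinarith [hd]
  have hpsx := psd u ξ hu
  have hpsz := psd u ζ hu
  -- Part 1
  have haa : -(mink ξ ξ) ≤ (mink u ξ) ^ 2 := by
    have : minkProj u ξ ξ = mink ξ ξ + (mink u ξ)^2 := by simp only [minkProj]; ring
    linarith [this ▸ hpsx]
  have part1 : 0 < (mink u ξ) ^ 2 * (1 - β) + β * (-(mink ξ ξ)) := by nlinarith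
  refine ⟨part1, ?_, ?_⟩
  · -- Part 2: W ≥ 0
    rw [e1, e2]
    have t1 : 0 ≤ -(mink ξ ξ) * mink ζ ζ := mul_nonneg (by linarith) (le_of_lt hζ)
    have t3 : 0 ≤ (1 - β) * (minkProj u ξ ξ * minkProj u ζ ζ - (minkProj u ξ ζ) ^ 2) :=
      mul_nonneg (by linarith) (by linarith)
    exact mul_nonneg hβ0 (by positivity)
  · -- Part 3: real roots
    set A : ℝ := (mink u ξ) ^ 2 - β * minkProj u ξ ξ with hA
    set B : ℝ := 2 * (mink u ξ * mink u ζ - β * minkProj u ξ ζ) with hB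
    set C : ℝ := (mink u ζ) ^ 2 - β * minkProj u ζ ζ with hC
    have hApos : 0 < A := by
      have : A = (mink u ξ) ^ 2 * (1 - β) + β * (-(mink ξ ξ)) := by
        rw [hA]; linear_combination β * e1
      linarith [this ▸ part1]
    have hexp : ∀ t : ℝ, (mink u (ζ + t • ξ)) ^ 2 - β * minkProj u (ζ + t • ξ) (ζ + t • ξ)
        = A * (t * t) + B * t + C := by
      intro t
      rw [hA, hB, hC]
      simp only [mink, minkProj, Pi.add_apply, Pi.smul_apply, smul_eq_mul]
      ring
    -- discriminant nonneg
    have hDid : discrim A B C = 4 * β * ((mink u ξ * mink u ζ - minkProj u ξ ζ) ^ 2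
        + (-(mink ξ ξ)) * mink ζ ζ
        + (1 - β) * (minkProj u ξ ξ * minkProj u ζ ζ - (minkProj u ξ ζ) ^ 2)) := by
      simp only [discrim, hA, hB, hC]
      linear_combination (4 * β * (minkProj u ζ ζ - (mink u ζ)^2)) * e1
        - (4 * β * (mink ξ ξ)) * e2
    have hD : 0 ≤ discrim A B C := by
      rw [hDid]
      have t1 : 0 ≤ -(mink ξ ξ) * mink ζ ζ := mul_nonneg (by linarith) (le_of_lt hζ)
      have t3 : 0 ≤ (1 - β) * (minkProj u ξ ξ * minkProj u ζ ζ - (minkProj u ξ ζ) ^ 2) :=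
        mul_nonneg (by linarith) (by linarith)
      have := sq_nonneg (mink u ξ * mink u ζ - minkProj u ξ ζ)
      positivity
    obtain ⟨s, hs0, hss⟩ : ∃ s : ℝ, 0 ≤ s ∧ discrim A B C = s * s :=
      ⟨Real.sqrt (discrim A B C), Real.sqrt_nonneg _, (Real.mul_self_sqrt hD).symm⟩
    have hAne : A ≠ 0 := ne_of_gt hApos
    refine ⟨(-B - s) / (2 * A), (-B + s) / (2 * A), ?_, ?_, ?_⟩
    · apply div_le_div_of_nonneg_right ?_ (by linarith) |>.trans_eq rfl
      · linarith
    · rw [hexp]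
      exact (quadratic_eq_zero_iff hAne hss _).mpr (Or.inr rfl)
    · rw [hexp]
      exact (quadratic_eq_zero_iff hAne hss _).mpr (Or.inl rfl)
end

section
/- Let (a_n) be a sequence of nonnegative reals satisfying a_n ≤ 2^{−n} + a_{n−1}/4 + a_{n−2}/16 for all n ≥ 3. Then a_n ≤ (n−2)/2ⁿ + s₂/2ⁿ + a₂/2^{n−4} + a₁/2^{n−2} for all n ≥ 3, where s₂ is a fixed constant (one may take s₂ = a₂·2); in particular a_n → 0 and ∑ a_n < ∞. -/
open Filter in
/-- A nonnegative sequence with a_n ≤ 2⁻ⁿ + a_{n−1}/4 + a_{n−2}/16 admits an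
explicit decaying bound; in particular it tends to 0 and is summable. -/
theorem iteration_sequence_summable (a : ℕ → ℝ) (hpos : ∀ n, 0 ≤ a n)
    (hrec : ∀ n, 3 ≤ n → a n ≤ (2 : ℝ) ^ (-(n : ℝ)) + a (n - 1) / 4 + a (n - 2) / 16) :
    (∃ s₂ : ℝ, ∀ n : ℕ, 3 ≤ n →
        a n ≤ ((n : ℝ) - 2) / 2 ^ n + s₂ / 2 ^ n
          + a 2 * 2 ^ 4 / 2 ^ n + a 1 * 2 ^ 2 / 2 ^ n) ∧
      Tendsto a atTop (nhds 0) ∧ Summable a := by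
  have hrpow : ∀ n : ℕ, (2 : ℝ) ^ (-(n : ℝ)) = ((2 : ℝ) ^ n)⁻¹ := by
    intro n
    rw [Real.rpow_neg (by norm_num), Real.rpow_natCast]
  set C : ℝ := 16 * a 2 + 4 * a 1 with hCdef
  have hC0 : 0 ≤ C := by
    have := hpos 1; have := hpos 2; simp only [hCdef]; nlinarith
  have key : ∀ n : ℕ, 3 ≤ n → a n ≤ ((n : ℝ) - 2 + C) / 2 ^ n := by
    intro n
    induction n using Nat.strong_induction_on with
    | _ n ih =>
      intro hn
      match n, hn with
      | 3, _ =>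
        have h := hrec 3 (by norm_num)
        rw [hrpow] at h
        have := hpos 1; have := hpos 2
        simp only [hCdef]
        norm_num at h ⊢
        nlinarith
      | 4, _ =>
        have h := hrec 4 (by norm_num)
        have h3 := hrec 3 (by norm_num)
        rw [hrpow] at h h3
        have := hpos 1; have := hpos 2
        simp only [hCdef]
        norm_num at h h3 ⊢
        nlinarith
      | (m + 5), _ =>
        have h := hrec (m + 5) (by omega)
        rw [hrpow] at h
        have h1 := ih (m + 4) (by omega) (by omega)
        have h2 := ih (m + 3) (by omega) (by omega)
        have heq1 : m + 5 - 1 = m + 4 := by omega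
        have heq2 : m + 5 - 2 = m + 3 := by omega
        rw [heq1, heq2] at h
        have hx : (0 : ℝ) < 2 ^ (m + 3) := by positivity
        have e1 : (2 : ℝ) ^ (m + 4) = 2 * 2 ^ (m + 3) := by ring
        have e2 : (2 : ℝ) ^ (m + 5) = 4 * 2 ^ (m + 3) := by ring
        rw [e1] at h1
        rw [e2] at h ⊢
        have hm : (0 : ℝ) ≤ (m : ℕ) := Nat.cast_nonneg m
        push_cast at h1 h2 ⊢
        rw [le_div_iff₀ (by positivity)] at h1 h2 ⊢
        nlinarith [mul_le_mul_of_nonneg_right h (by positivity : (0:ℝ) ≤ 4 * 2 ^ (m + 3)),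
          mul_inv_cancel₀ (show (4 * 2 ^ (m + 3) : ℝ) ≠ 0 by positivity), hx.le]
  refine ⟨⟨0, ?_⟩, ?_, ?_⟩
  · intro n hn
    have := key n hn
    have hx : (0 : ℝ) < 2 ^ n := by positivity
    rw [← add_div, ← add_div, ← add_div]
    calc a n ≤ ((n : ℝ) - 2 + C) / 2 ^ n := this
      _ = ((n : ℝ) - 2 + 0 + a 2 * 2 ^ 4 + a 1 * 2 ^ 2) / 2 ^ n := by
          rw [hCdef]; ring_nf
  · -- Tendsto
    have hg : Tendsto (fun n : ℕ => ((n : ℝ) + C) * (1 / 2 : ℝ) ^ n) atTop (nhds 0) := by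
      have hs : Summable (fun n : ℕ => ((n : ℝ) + C) * (1 / 2 : ℝ) ^ n) := by
        have h1 : Summable (fun n : ℕ => (n : ℝ) ^ 1 * (1 / 2 : ℝ) ^ n) :=
          summable_pow_mul_geometric_of_norm_lt_one 1 (by norm_num)
        have h2 : Summable (fun n : ℕ => C * (1 / 2 : ℝ) ^ n) :=
          (summable_geometric_of_lt_one (by norm_num) (by norm_num)).mul_left C
        have := h1.add h2
        simpa [add_mul, pow_one] using this
      exact hs.tendsto_atTop_zero
    apply squeeze_zero' (Eventually.of_forall hpos) ?_ hg
    filter_upwards [eventually_ge_atTop 3] with n hn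
    have := key n hn
    have hx : (0 : ℝ) < 2 ^ n := by positivity
    calc a n ≤ ((n : ℝ) - 2 + C) / 2 ^ n := this
      _ ≤ ((n : ℝ) + C) / 2 ^ n := by
          gcongr
          linarith
      _ = ((n : ℝ) + C) * (1 / 2 : ℝ) ^ n := by
          rw [div_eq_mul_inv, one_div, inv_pow]
  · -- Summable
    have hs : Summable (fun n : ℕ => ((n : ℝ) + C) * (1 / 2 : ℝ) ^ n) := by
      have h1 : Summable (fun n : ℕ => (n : ℝ) ^ 1 * (1 / 2 : ℝ) ^ n) :=
        summable_pow_mul_geometric_of_norm_lt_one 1 (by norm_num)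
      have h2 : Summable (fun n : ℕ => C * (1 / 2 : ℝ) ^ n) :=
        (summable_geometric_of_lt_one (by norm_num) (by norm_num)).mul_left C
      have := h1.add h2
      simpa [add_mul, pow_one] using this
    rw [← summable_nat_add_iff 3]
    refine Summable.of_nonneg_of_le (fun n => hpos _) ?_ ((summable_nat_add_iff 3).mpr hs)
    · intro n
      have hk := key (n + 3) (by omega)
      have hx : (0 : ℝ) < 2 ^ (n + 3) := by positivity
      calc a (n + 3) ≤ (((n + 3 : ℕ) : ℝ) - 2 + C) / 2 ^ (n + 3) := hk
        _ ≤ (((n + 3 : ℕ) : ℝ) + C) / 2 ^ (n + 3) := by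
            gcongr
            push_cast; linarith
        _ = (((n + 3 : ℕ) : ℝ) + C) * (1 / 2 : ℝ) ^ (n + 3) := by
            rw [div_eq_mul_inv, one_div, inv_pow]
end

section
/- By induction: if nonnegative reals (a_n) satisfy a_n ≤ 2^{−n} + a_{n−1}/4 + a_{n−2}/16 for n ≥ 3, then a_n ≤ s_n/2^{2n−3} + F_n·a₂/2^{2n−4} + F_{n−1}·a₁/2^{2n−2} for all n ≥ 3, where F_n is the n-th Fibonacci number (F₀ = 0, F₁ = 1) and (s_n) is defined by s₁ = s₂ = 0 and s_n = 2^{n−3} + s_{n−1} + s_{n−2}. -/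
/-- Inductive bound on the iteration error sequence in terms of the
Fibonacci numbers and the auxiliary sequence s_n. -/
theorem inductive_fibonacci_bound (a s : ℕ → ℝ) (hpos : ∀ n, 0 ≤ a n)
    (hrec : ∀ n, 3 ≤ n → a n ≤ (2 : ℝ) ^ (-(n : ℝ)) + a (n - 1) / 4 + a (n - 2) / 16)
    (hs1 : s 1 = 0) (hs2 : s 2 = 0)
    (hsrec : ∀ n, 3 ≤ n → s n = 2 ^ (n - 3) + s (n - 1) + s (n - 2)) :
    ∀ n, 3 ≤ n →
      a n ≤ s n / 2 ^ (2 * n - 3) + (Nat.fib n : ℝ) * a 2 / 2 ^ (2 * n - 4)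
        + (Nat.fib (n - 1) : ℝ) * a 1 / 2 ^ (2 * n - 2) := by
  have hp : ∀ m : ℕ, (2 : ℝ) ^ (-(m : ℝ)) = 1 / (2 : ℝ) ^ m := by
    intro m
    rw [Real.rpow_neg (by norm_num), Real.rpow_natCast, one_div]
  set P : ℕ → Prop := fun k =>
    a (k + 3) ≤ s (k + 3) / 2 ^ (2 * k + 3) + (Nat.fib (k + 3) : ℝ) * a 2 / 2 ^ (2 * k + 2)
      + (Nat.fib (k + 2) : ℝ) * a 1 / 2 ^ (2 * k + 4) with hP
  have hs3 : s 3 = 1 := by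
    have := hsrec 3 (by norm_num); simp [hs1, hs2] at this; linarith
  have hs4 : s 4 = 3 := by
    have := hsrec 4 (by norm_num); simp [hs2, hs3] at this; linarith
  have hP0 : P 0 := by
    have h := hrec 3 (by norm_num)
    rw [hp 3] at h
    simp only [hP]
    norm_num [hs3, Nat.fib] at h ⊢
    have := hpos 2
    linarith
  have hP1 : P 1 := by
    have h := hrec 4 (by norm_num)
    rw [hp 4] at h
    simp only [hP] at hP0 ⊢
    norm_num [hs3, hs4, Nat.fib] at hP0 h ⊢
    have h1 := hpos 1
    have h2 := hpos 2
    linarith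
  have key : ∀ k : ℕ, P k ∧ P (k + 1) := by
    intro k
    induction k with
    | zero => exact ⟨hP0, hP1⟩
    | succ k ih =>
      refine ⟨ih.2, ?_⟩
      obtain ⟨ihk, ihk1⟩ := ih
      simp only [hP] at ihk ihk1 ⊢
      have h := hrec (k + 5) (by omega)
      rw [hp (k + 5)] at h
      have e1 : k + 5 - 1 = k + 4 := by omega
      have e2 : k + 5 - 2 = k + 3 := by omega
      rw [e1, e2] at h
      have hsr := hsrec (k + 5) (by omega)
      have e3 : k + 5 - 3 = k + 2 := by omega
      have e4 : k + 5 - 1 = k + 4 := by omega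
      have e5 : k + 5 - 2 = k + 3 := by omega
      rw [e3, e4, e5] at hsr
      have hf1 : (Nat.fib (k + 5) : ℝ) = Nat.fib (k + 4) + Nat.fib (k + 3) := by
        rw [show k + 5 = (k + 3) + 2 by ring, Nat.fib_add_two]; push_cast; ring
      have hf2 : (Nat.fib (k + 4) : ℝ) = Nat.fib (k + 3) + Nat.fib (k + 2) := by
        rw [show k + 4 = (k + 2) + 2 by ring, Nat.fib_add_two]; push_cast; ring
      -- goal for index k+2
      have hchain : a (k + 5) ≤ 1 / (2:ℝ) ^ (k + 5)
          + (s (k + 4) / 2 ^ (2 * k + 5) + (Nat.fib (k + 4) : ℝ) * a 2 / 2 ^ (2 * k + 4)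
            + (Nat.fib (k + 3) : ℝ) * a 1 / 2 ^ (2 * k + 6)) / 4
          + (s (k + 3) / 2 ^ (2 * k + 3) + (Nat.fib (k + 3) : ℝ) * a 2 / 2 ^ (2 * k + 2)
            + (Nat.fib (k + 2) : ℝ) * a 1 / 2 ^ (2 * k + 4)) / 16 := by
        have h4 : a (k + 4) / 4 ≤ (s (k + 4) / 2 ^ (2 * k + 5) + (Nat.fib (k + 4) : ℝ) * a 2 / 2 ^ (2 * k + 4)
            + (Nat.fib (k + 3) : ℝ) * a 1 / 2 ^ (2 * k + 6)) / 4 := by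
          have := ihk1
          have e : 2 * (k + 1) + 3 = 2 * k + 5 := by ring
          have e' : 2 * (k + 1) + 2 = 2 * k + 4 := by ring
          have e'' : 2 * (k + 1) + 4 = 2 * k + 6 := by ring
          rw [e, e', e''] at this
          linarith
        have h16 : a (k + 3) / 16 ≤ (s (k + 3) / 2 ^ (2 * k + 3) + (Nat.fib (k + 3) : ℝ) * a 2 / 2 ^ (2 * k + 2)
            + (Nat.fib (k + 2) : ℝ) * a 1 / 2 ^ (2 * k + 4)) / 16 := by linarith [ihk]
        linarith
      have heq : 1 / (2:ℝ) ^ (k + 5)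
          + (s (k + 4) / 2 ^ (2 * k + 5) + (Nat.fib (k + 4) : ℝ) * a 2 / 2 ^ (2 * k + 4)
            + (Nat.fib (k + 3) : ℝ) * a 1 / 2 ^ (2 * k + 6)) / 4
          + (s (k + 3) / 2 ^ (2 * k + 3) + (Nat.fib (k + 3) : ℝ) * a 2 / 2 ^ (2 * k + 2)
            + (Nat.fib (k + 2) : ℝ) * a 1 / 2 ^ (2 * k + 4)) / 16
          = s (k + 5) / 2 ^ (2 * (k + 2) + 3) + (Nat.fib (k + 5) : ℝ) * a 2 / 2 ^ (2 * (k + 2) + 2)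
            + (Nat.fib (k + 4) : ℝ) * a 1 / 2 ^ (2 * (k + 2) + 4) := by
        rw [hsr, hf1, hf2]
        have hy : (2:ℝ) ^ k ≠ 0 := by positivity
        have ee : ∀ j : ℕ, (2:ℝ) ^ (2 * k + j) = (2:ℝ) ^ k * (2:ℝ) ^ k * 2 ^ j := by
          intro j; rw [two_mul, pow_add, pow_add]
        rw [ee 5, ee 4, ee 6, ee 3, ee 2, show 2 * (k+2) + 3 = 2*k + 7 by ring,
          show 2 * (k+2) + 2 = 2*k + 6 by ring, show 2 * (k+2) + 4 = 2*k + 8 by ring,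
          ee 7, ee 6, ee 8, show k + 5 = k + 5 from rfl, pow_add, pow_add]
        field_simp
        ring
      rw [heq] at hchain
      exact hchain
  intro n hn
  obtain ⟨k, rfl⟩ : ∃ k, n = k + 3 := ⟨n - 3, by omega⟩
  have := (key k).1
  simp only [hP] at this
  have e1 : 2 * (k + 3) - 3 = 2 * k + 3 := by omega
  have e2 : 2 * (k + 3) - 4 = 2 * k + 2 := by omega
  have e3 : 2 * (k + 3) - 2 = 2 * k + 4 := by omega
  have e4 : k + 3 - 1 = k + 2 := by omega
  rw [e1, e2, e3, e4]
  exact this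
end

section
/- Let λ, η, χ₁, χ₂, χ₃, χ₄, cₛ² be positive reals satisfying: λχ₁ + cₛ²λ(χ₄ − 4η/3) ≥ cₛ²λχ₂ + λχ₃ + χ₂χ₃ − χ₁(χ₄ − 4η/3) ≥ 0 and 2λχ₁ ≥ λχ₂cₛ² − χ₁(χ₄ − 4η/3) + λχ₃ + χ₃χ₂, and Δ > 0 where Δ = 9λ²χ₂²cₛ⁴ + 6λcₛ²(χ₁(4η − 3χ₄)(2λ + χ₂) + 3χ₂χ₃(λ + χ₂)) + (χ₁(4η − 3χ₄) + 3χ₃(λ + χ₂))². Then β₊ := (3λχ₂cₛ² + χ₁(4η − 3χ₄) + 3χ₃(λ + χ₂) + √Δ)/(6λχ₁) ≤ 1. -/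
/-- Under the causality conditions of the paper, the largest characteristic
speed squared β₊ is at most 1. -/
theorem beta_plus_le_one (lam η χ₁ χ₂ χ₃ χ₄ cs2 : ℝ)
    (hlam : 0 < lam) (hη : 0 < η) (hχ₁ : 0 < χ₁) (hχ₂ : 0 < χ₂)
    (hχ₃ : 0 < χ₃) (hχ₄ : 0 < χ₄) (hcs : 0 < cs2)
    (Δ : ℝ)
    (hΔdef : Δ = 9 * lam ^ 2 * χ₂ ^ 2 * cs2 ^ 2
      + 6 * lam * cs2 * (χ₁ * (4 * η - 3 * χ₄) * (2 * lam + χ₂)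
          + 3 * χ₂ * χ₃ * (lam + χ₂))
      + (χ₁ * (4 * η - 3 * χ₄) + 3 * χ₃ * (lam + χ₂)) ^ 2)
    (hΔ : 0 < Δ)
    (h1a : cs2 * lam * χ₂ + lam * χ₃ + χ₂ * χ₃ - χ₁ * (χ₄ - 4 * η / 3)
      ≤ lam * χ₁ + cs2 * lam * (χ₄ - 4 * η / 3))
    (h1b : 0 ≤ cs2 * lam * χ₂ + lam * χ₃ + χ₂ * χ₃ - χ₁ * (χ₄ - 4 * η / 3))
    (h2 : lam * χ₂ * cs2 - χ₁ * (χ₄ - 4 * η / 3) + lam * χ₃ + χ₃ * χ₂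
      ≤ 2 * lam * χ₁) :
    (3 * lam * χ₂ * cs2 + χ₁ * (4 * η - 3 * χ₄) + 3 * χ₃ * (lam + χ₂)
        + Real.sqrt Δ) / (6 * lam * χ₁) ≤ 1 := by
  set S := 3 * lam * χ₂ * cs2 + χ₁ * (4 * η - 3 * χ₄) + 3 * χ₃ * (lam + χ₂) with hS
  have hA : 0 ≤ 6 * lam * χ₁ - S := by rw [hS]; nlinarith [h2]
  have hΔle : Δ ≤ (6 * lam * χ₁ - S) ^ 2 := by
    rw [hΔdef, hS]
    nlinarith [mul_pos hlam hχ₁, h1a]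
  have hsqrt : Real.sqrt Δ ≤ 6 * lam * χ₁ - S := by
    calc Real.sqrt Δ ≤ Real.sqrt ((6 * lam * χ₁ - S) ^ 2) := Real.sqrt_le_sqrt hΔle
    _ = 6 * lam * χ₁ - S := by rw [Real.sqrt_sq hA]
  rw [div_le_one (by positivity)]
  linarith
end
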